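/- Seller deviation lemma (in expectation over the buyer's value): for every nondecreasing c : [0,1] → ℝ, every Borel probability measure ν on ℝ with ∫|v| dν(v) < ∞, and every λ ∈ (0,1), the seller's optimal proposer utility satisfies u_S := ∫₀¹ sup_{p ∈ ℝ} ((p − c(q))·ν({v : v ≥ p})) dq ≥ ∫_ℝ (∫₀^{λ·x(v)} (c(q/λ) − c(q)) dq) dν(v). -/

import Mathlib

open MeasureTheory Set

/-- The probability that the seller (with cost curve `c` on quantiles in `[0,1]`)
accepts a price `p`: the Lebesgue measure of `{q ∈ [0,1] : c q ≤ p}`. -/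
noncomputable def accProb (c : ℝ → ℝ) (p : ℝ) : ℝ :=
  (volume {q : ℝ | q ∈ Icc (0:ℝ) 1 ∧ c q ≤ p}).toReal

/-- First-best gains from trade, in expectation over the buyer value `v ∼ ν`. -/
noncomputable def FB (c : ℝ → ℝ) (ν : Measure ℝ) : ℝ :=
  ∫ v, (∫ q in (0:ℝ)..1, max (v - c q) 0) ∂ν

/-- The buyer's expected optimal proposer utility. -/
noncomputable def uB (c : ℝ → ℝ) (ν : Measure ℝ) : ℝ :=
  ∫ v, (⨆ p : ℝ, (v - p) * accProb c p) ∂ν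

/-- The seller's expected optimal proposer utility. -/
noncomputable def uS (c : ℝ → ℝ) (ν : Measure ℝ) : ℝ :=
  ∫ q in (0:ℝ)..1, ⨆ p : ℝ, (p - c q) * (ν {v : ℝ | p ≤ v}).toReal

theorem stmt5 (c : ℝ → ℝ) (hc : MonotoneOn c (Icc (0:ℝ) 1))
    (ν : Measure ℝ) [IsProbabilityMeasure ν]
    (hν : Integrable (fun v : ℝ => v) ν)
    (l : ℝ) (hl : l ∈ Ioo (0:ℝ) 1) :
    uS c ν ≥ ∫ v, (∫ q in (0:ℝ)..(l * accProb c v), (c (q / l) - c q)) ∂ν := by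
  obtain ⟨hl0, hl1⟩ := hl
  set G : ℝ → ℝ := fun p => (ν (Ici p)).toReal with hGdef
  have hG0 : ∀ p, 0 ≤ G p := fun p => ENNReal.toReal_nonneg
  have habs : Integrable (fun v : ℝ => |v|) ν := hν.abs
  set M : ℝ → ℝ := fun a => (∫ v, |v| ∂ν) + |a| with hMdef
  -- every deviation payoff is bounded
  have hterm : ∀ a p : ℝ, (p - a) * G p ≤ M a := by
    intro a p
    have hM0 : 0 ≤ M a := add_nonneg (integral_nonneg fun v => abs_nonneg v) (abs_nonneg a)
    rcases le_or_gt p a with hp | hp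
    · have h0 : (p - a) * G p ≤ 0 :=
        mul_nonpos_of_nonpos_of_nonneg (by linarith) (hG0 p)
      linarith
    · have h1 : (p - a) * G p = ∫ _ in Ici p, (p - a) ∂ν := by
        rw [setIntegral_const, smul_eq_mul, mul_comm]
        rfl
      have hgi : Integrable (fun v : ℝ => |v| + |a|) ν := habs.add (integrable_const _)
      have h2 : (∫ _ in Ici p, (p - a) ∂ν) ≤ ∫ v in Ici p, (|v| + |a|) ∂ν := by
        refine setIntegral_mono_on (integrableOn_const (measure_ne_top ν _))
          hgi.integrableOn measurableSet_Ici ?_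
        intro v hv
        have hv' : p ≤ v := hv
        have := le_abs_self v
        have := neg_abs_le a
        linarith
      have h3 : (∫ v in Ici p, (|v| + |a|) ∂ν) ≤ ∫ v, (|v| + |a|) ∂ν :=
        setIntegral_le_integral hgi
          (Filter.Eventually.of_forall fun v => add_nonneg (abs_nonneg _) (abs_nonneg _))
      have h4 : (∫ v, (|v| + |a|) ∂ν) = M a := by
        rw [integral_add habs (integrable_const _), integral_const]
        simp [hMdef]
      linarith
  have hbdd : ∀ a : ℝ, BddAbove (range fun p : ℝ => (p - a) * G p) := by
    intro a
    exact ⟨M a, by rintro _ ⟨p, rfl⟩; exact hterm a p⟩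
  set K : ℝ → ℝ := fun q => ⨆ p : ℝ, (p - c q) * G p with hKdef
  have hKnonneg : ∀ q, 0 ≤ K q := by
    intro q
    have := le_ciSup (hbdd (c q)) (c q)
    simpa using this
  have hKanti : AntitoneOn K (Icc (0:ℝ) 1) := by
    intro q1 h1 q2 h2 h12
    refine ciSup_le fun p => le_trans ?_ (le_ciSup (hbdd (c q1)) p)
    exact mul_le_mul_of_nonneg_right (by linarith [hc h1 h2 h12]) (hG0 p)
  have hKint1 : IntegrableOn K (Ioc (0:ℝ) 1) volume := by
    have h : AntitoneOn K (uIcc (0:ℝ) 1) := by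
      rw [uIcc_of_le zero_le_one]; exact hKanti
    exact h.intervalIntegrable.1
  have hKintl : IntegrableOn K (Ioc (0:ℝ) l) volume := by
    have h : AntitoneOn K (uIcc (0:ℝ) l) := by
      rw [uIcc_of_le hl0.le]
      exact hKanti.mono (Icc_subset_Icc le_rfl hl1.le)
    exact h.intervalIntegrable.1
  -- accProb basic facts
  have hacc_mem : ∀ v, accProb c v ∈ Icc (0:ℝ) 1 := by
    intro v
    refine ⟨ENNReal.toReal_nonneg, ?_⟩
    have hsub : {q : ℝ | q ∈ Icc (0:ℝ) 1 ∧ c q ≤ v} ⊆ Icc 0 1 := fun q hq => hq.1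
    have hm := measure_mono (μ := volume) hsub
    rw [Real.volume_Icc] at hm
    have := ENNReal.toReal_mono (by simp) hm
    simpa [accProb] using this
  -- crux: prices below l * accProb are accepted by the buyer
  have crux : ∀ v q : ℝ, 0 < q → q < l * accProb c v → c (q / l) ≤ v := by
    intro v q hq0 hq
    have hx1 := (hacc_mem v).2
    have hql : q / l < accProb c v := (div_lt_iff₀ hl0).2 (by linarith [mul_comm l (accProb c v)])
    have hql0 : 0 < q / l := div_pos hq0 hl0
    have hql1 : q / l ≤ 1 := le_trans hql.le hx1
    by_contra hcv
    push_neg at hcv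
    have hsub : {q' : ℝ | q' ∈ Icc (0:ℝ) 1 ∧ c q' ≤ v} ⊆ Ico 0 (q / l) := by
      rintro q' ⟨hq', hcq'⟩
      refine ⟨hq'.1, ?_⟩
      by_contra hge
      push_neg at hge
      exact absurd (le_trans (hc ⟨hql0.le, hql1⟩ hq' hge) hcq') (not_le.2 hcv)
    have hm := measure_mono (μ := volume) hsub
    rw [Real.volume_Ico] at hm
    have h := ENNReal.toReal_mono (by simp) hm
    rw [ENNReal.toReal_ofReal (by linarith)] at h
    have : accProb c v ≤ q / l := by simpa [accProb] using h
    linarith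
  -- facts about q and q/l on [0, l]
  have hql_facts : ∀ q ∈ Icc (0:ℝ) l, q ∈ Icc (0:ℝ) 1 ∧ q / l ∈ Icc (0:ℝ) 1 ∧ q ≤ q / l := by
    intro q hq
    obtain ⟨hq0, hq2⟩ := hq
    refine ⟨⟨hq0, by linarith⟩, ⟨div_nonneg hq0 hl0.le, (div_le_one hl0).2 hq2⟩, ?_⟩
    rw [le_div_iff₀ hl0]
    nlinarith
  have hA : ∀ q ∈ Icc (0:ℝ) l, 0 ≤ c (q / l) - c q ∧ c (q / l) - c q ≤ c 1 - c 0 := by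
    intro q hq
    obtain ⟨hq1, hql1, hle⟩ := hql_facts q hq
    constructor
    · have := hc hq1 hql1 hle
      linarith
    · have h1 : c (q / l) ≤ c 1 := hc hql1 ⟨zero_le_one, le_rfl⟩ hql1.2
      have h2 : c 0 ≤ c q := hc ⟨le_rfl, zero_le_one⟩ hq1 hq1.1
      linarith
  -- measurable representatives on (0, l]
  have hsubIcc : Ioc (0:ℝ) l ⊆ Icc (0:ℝ) 1 := fun q hq => ⟨hq.1.le, by linarith [hq.2]⟩
  have hWm : AEMeasurable (fun q : ℝ => c (q / l)) (volume.restrict (Ioc (0:ℝ) l)) := by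
    refine aemeasurable_restrict_of_monotoneOn measurableSet_Ioc ?_
    intro q1 h1 q2 h2 h12
    have hf1 := hql_facts q1 (Ioc_subset_Icc_self h1)
    have hf2 := hql_facts q2 (Ioc_subset_Icc_self h2)
    exact hc hf1.2.1 hf2.2.1 (by gcongr)
  have hcm : AEMeasurable c (volume.restrict (Ioc (0:ℝ) l)) :=
    aemeasurable_restrict_of_monotoneOn measurableSet_Ioc (hc.mono hsubIcc)
  set W' : ℝ → ℝ := hWm.mk _ with hW'def
  set c' : ℝ → ℝ := hcm.mk _ with hc'def
  have hW'meas : Measurable W' := hWm.measurable_mk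
  have hc'meas : Measurable c' := hcm.measurable_mk
  have hN : ∀ᵐ q ∂(volume.restrict (Ioc (0:ℝ) l)),
      c (q / l) = W' q ∧ c q = c' q ∧ q ∈ Ioc (0:ℝ) l :=
    hWm.ae_eq_mk.and (hcm.ae_eq_mk.and (ae_restrict_mem measurableSet_Ioc))
  set h : ℝ → ℝ → ℝ := fun v q => if c (q / l) ≤ v then c (q / l) - c q else 0 with hhdef
  set h' : ℝ → ℝ → ℝ := fun v q => if W' q ≤ v then W' q - c' q else 0 with hh'def
  have hhh' : ∀ v, h v =ᵐ[volume.restrict (Ioc (0:ℝ) l)] h' v := by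
    intro v
    filter_upwards [hN] with q hq
    simp only [hhdef, hh'def, ← hq.1, ← hq.2.1]
  have hfin : IsFiniteMeasure (volume.restrict (Ioc (0:ℝ) l)) := by
    constructor
    rw [Measure.restrict_apply_univ, Real.volume_Ioc]
    exact ENNReal.ofReal_lt_top
  -- bound |h'| ≤ c 1 - c 0 a.e.
  have hbound : ∀ᵐ q ∂(volume.restrict (Ioc (0:ℝ) l)), ∀ v, |h' v q| ≤ c 1 - c 0 := by
    filter_upwards [hN] with q hq v
    obtain ⟨hW, hcq, hqm⟩ := hq
    have hAq := hA q (Ioc_subset_Icc_self hqm)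
    simp only [hh'def, ← hW, ← hcq]
    split_ifs with hcond
    · rw [abs_of_nonneg hAq.1]; exact hAq.2
    · rw [abs_zero]; linarith [hAq.1, hAq.2]
  have hh'vint : ∀ v, Integrable (h' v) (volume.restrict (Ioc (0:ℝ) l)) := by
    intro v
    refine Integrable.mono' (integrable_const (c 1 - c 0)) ?_ ?_
    · exact (Measurable.ite (measurableSet_le hW'meas measurable_const)
        (hW'meas.sub hc'meas) measurable_const).aestronglyMeasurable
    · filter_upwards [hbound] with q hq
      simpa [Real.norm_eq_abs] using hq v
  -- lift q-a.e. statements to the product measure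
  have hlift : ∀ P : ℝ → Prop, (∀ᵐ q ∂(volume.restrict (Ioc (0:ℝ) l)), P q) →
      (∀ᵐ p : ℝ × ℝ ∂(ν.prod (volume.restrict (Ioc (0:ℝ) l))), P p.2) := by
    intro P hP
    rw [ae_iff] at hP ⊢
    refine measure_mono_null (fun p hp => ?_)
      (show (ν.prod (volume.restrict (Ioc (0:ℝ) l)))
        (univ ×ˢ toMeasurable (volume.restrict (Ioc (0:ℝ) l)) {q | ¬ P q}) = 0 from ?_)
    · exact ⟨trivial, subset_toMeasurable _ _ hp⟩
    · rw [Measure.prod_prod, measure_toMeasurable, hP, mul_zero]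
  have hint : Integrable (Function.uncurry h') (ν.prod (volume.restrict (Ioc (0:ℝ) l))) := by
    refine Integrable.mono' (integrable_const (c 1 - c 0)) ?_ ?_
    · refine (Measurable.ite ?_ (hW'meas.comp measurable_snd |>.sub
        (hc'meas.comp measurable_snd)) measurable_const).aestronglyMeasurable
      exact measurableSet_le (hW'meas.comp measurable_snd) measurable_fst
    · filter_upwards [hlift _ hbound] with p hp
      simpa [Real.norm_eq_abs, Function.uncurry] using hp p.1
  -- Fubini
  have hswap : (∫ v, (∫ q in Ioc (0:ℝ) l, h' v q) ∂ν)
      = ∫ q in Ioc (0:ℝ) l, (∫ v, h' v q ∂ν) := integral_integral_swap hint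
  set g' : ℝ → ℝ := fun q => (ν (Ici (W' q))).toReal • (W' q - c' q) with hg'def
  have hinner : ∀ q, (∫ v, h' v q ∂ν) = g' q := by
    intro q
    have heq : (fun v => h' v q) = (Ici (W' q)).indicator (fun _ => W' q - c' q) := by
      funext v
      simp only [hh'def, indicator, mem_Ici]
    rw [heq, integral_indicator_const _ measurableSet_Ici, hg'def]
    rfl
  have hg'int : Integrable g' (volume.restrict (Ioc (0:ℝ) l)) := by
    have := hint.integral_prod_right
    refine this.congr (Filter.Eventually.of_forall fun q => ?_)
    exact hinner q
  have hψint : Integrable (fun v => ∫ q in Ioc (0:ℝ) l, h' v q) ν := hint.integral_prod_left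
  -- step 2 : ∫ g' ≤ ∫ K on (0, l]
  have hstep2 : (∫ q in Ioc (0:ℝ) l, g' q) ≤ ∫ q in Ioc (0:ℝ) l, K q := by
    refine integral_mono_ae hg'int hKintl ?_
    filter_upwards [hN] with q hq
    obtain ⟨hW, hcq, hqm⟩ := hq
    have : g' q = (c (q / l) - c q) * G (c (q / l)) := by
      rw [hg'def]
      simp only [← hW, ← hcq, smul_eq_mul, hGdef]
      ring
    rw [this]
    exact le_ciSup (hbdd (c q)) (c (q / l))
  -- step 1 : ∫ K on (0,l] ≤ ∫ K on (0,1]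
  have hstep1 : (∫ q in Ioc (0:ℝ) l, K q) ≤ ∫ q in Ioc (0:ℝ) 1, K q := by
    refine setIntegral_mono_set hKint1 (Filter.Eventually.of_forall hKnonneg) ?_
    exact HasSubset.Subset.eventuallyLE (Ioc_subset_Ioc le_rfl hl1.le)
  -- step 4 : pointwise comparison of inner integrals
  have hstep4 : ∀ v, (∫ q in (0:ℝ)..(l * accProb c v), (c (q / l) - c q))
      ≤ ∫ q in Ioc (0:ℝ) l, h' v q := by
    intro v
    have hx := hacc_mem v
    have hb0 : 0 ≤ l * accProb c v := mul_nonneg hl0.le hx.1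
    have hbl : l * accProb c v ≤ l := by nlinarith [hx.2]
    have h1 : (∫ q in (0:ℝ)..(l * accProb c v), (c (q / l) - c q))
        = ∫ q in Ioo (0:ℝ) (l * accProb c v), (c (q / l) - c q) := by
      rw [intervalIntegral.integral_of_le hb0, integral_Ioc_eq_integral_Ioo]
    have h2 : (∫ q in Ioo (0:ℝ) (l * accProb c v), (c (q / l) - c q))
        = ∫ q in Ioo (0:ℝ) (l * accProb c v), h v q := by
      refine setIntegral_congr_fun measurableSet_Ioo fun q hq => ?_
      simp only [hhdef]
      rw [if_pos (crux v q hq.1 hq.2)]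
    have h3 : (∫ q in Ioo (0:ℝ) (l * accProb c v), h v q)
        = ∫ q in Ioc (0:ℝ) (l * accProb c v), h v q := integral_Ioc_eq_integral_Ioo.symm
    have hhvint : IntegrableOn (h v) (Ioc (0:ℝ) l) volume :=
      (hh'vint v).congr (hhh' v).symm
    have h4 : (∫ q in Ioc (0:ℝ) (l * accProb c v), h v q) ≤ ∫ q in Ioc (0:ℝ) l, h v q := by
      refine setIntegral_mono_set hhvint ?_
        (HasSubset.Subset.eventuallyLE (Ioc_subset_Ioc le_rfl hbl))
      filter_upwards [ae_restrict_mem measurableSet_Ioc] with q hq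
      simp only [hhdef]
      split_ifs with hcond
      · exact (hA q (Ioc_subset_Icc_self hq)).1
      · exact le_rfl
    have h5 : (∫ q in Ioc (0:ℝ) l, h v q) = ∫ q in Ioc (0:ℝ) l, h' v q :=
      integral_congr_ae (hhh' v)
    rw [h1, h2, h3, ← h5]
    exact h4
  have hFnonneg : ∀ v, 0 ≤ ∫ q in (0:ℝ)..(l * accProb c v), (c (q / l) - c q) := by
    intro v
    have hx := hacc_mem v
    have hb0 : 0 ≤ l * accProb c v := mul_nonneg hl0.le hx.1
    have hbl : l * accProb c v ≤ l := by nlinarith [hx.2]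
    refine intervalIntegral.integral_nonneg hb0 fun u hu => ?_
    exact (hA u ⟨hu.1, le_trans hu.2 hbl⟩).1
  -- assemble
  have hmain : (∫ v, (∫ q in (0:ℝ)..(l * accProb c v), (c (q / l) - c q)) ∂ν)
      ≤ ∫ v, (∫ q in Ioc (0:ℝ) l, h' v q) ∂ν :=
    integral_mono_of_nonneg (Filter.Eventually.of_forall hFnonneg) hψint
      (Filter.Eventually.of_forall hstep4)
  have hUS : uS c ν = ∫ q in Ioc (0:ℝ) 1, K q := by
    rw [uS, intervalIntegral.integral_of_le zero_le_one]
    rfl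
  have hmid : (∫ v, (∫ q in Ioc (0:ℝ) l, h' v q) ∂ν) = ∫ q in Ioc (0:ℝ) l, g' q := by
    rw [hswap]
    exact integral_congr_ae (Filter.Eventually.of_forall hinner)
  rw [ge_iff_le, hUS]
  calc (∫ v, (∫ q in (0:ℝ)..(l * accProb c v), (c (q / l) - c q)) ∂ν)
      ≤ ∫ v, (∫ q in Ioc (0:ℝ) l, h' v q) ∂ν := hmain
    _ = ∫ q in Ioc (0:ℝ) l, g' q := hmid
    _ ≤ ∫ q in Ioc (0:ℝ) l, K q := hstep2
    _ ≤ ∫ q in Ioc (0:ℝ) 1, K q := hstep1
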